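/- Let d ≥ 1, let d_A', d_B' ≥ 1, and let γ be a private state with key dimension d on H = C^d ⊗ C^{d_A'} ⊗ C^d ⊗ C^{d_B'} (factors ordered A, A', B, B'): γ = U(ψ_d ⊗ σ_s)U†, where ψ_d = (1/d)·∑_{i,j=1}^d |ii⟩⟨jj|_{AB} is the maximally entangled state on the key systems A, B, σ_s is an arbitrary density matrix on C^{d_A'} ⊗ C^{d_B'}, and U = ∑_{i,j=1}^d |i⟩⟨i|_A ⊗ |j⟩⟨j|_B ⊗ U^{(ij)} is a twisting unitary with each U^{(ij)} unitary on C^{d_A'} ⊗ C^{d_B'}. Let ρ be a density matrix on H with ‖ρ − γ‖₁ ≤ ε for some ε ∈ [0,2). Then the max-relative entropy of entanglement of ρ across the bipartition AA' : BB' satisfies E_max(ρ) ≥ log₂ d + 2·log₂(1 − ε/2). -/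

import Mathlib

open scoped Kronecker ComplexOrder
open Matrix

noncomputable section

/-- A density matrix: positive semidefinite with unit trace. -/
def IsDensity {n : Type*} [Fintype n] (M : Matrix n n ℂ) : Prop :=
  M.PosSemidef ∧ M.trace = 1

/-- A bipartite density matrix is separable if it is a finite convex combination of
Kronecker products of density matrices on the two factors. -/
def SepState {m k : Type*} [Fintype m] [Fintype k]
    (M : Matrix (m × k) (m × k) ℂ) : Prop :=
  ∃ (L : ℕ) (p : Fin L → ℝ) (P : Fin L → Matrix m m ℂ) (Q : Fin L → Matrix k k ℂ),
    (∀ i, 0 ≤ p i) ∧ (∑ i, p i) = 1 ∧ (∀ i, IsDensity (P i)) ∧ (∀ i, IsDensity (Q i)) ∧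
    M = ∑ i, ((p i : ℂ) • (P i ⊗ₖ Q i))

/-- Max-relative entropy `D_max(ρ‖σ) = inf {x : 2^x • σ - ρ ⪰ 0}`, `+∞` if no such `x`. -/
def Dmax {n : Type*} [Fintype n] (ρ σ : Matrix n n ℂ) : EReal :=
  sInf {x : EReal | ∃ r : ℝ, x = (r : EReal) ∧ (((2:ℝ) ^ r) • σ - ρ).PosSemidef}

/-- Trace norm `‖M‖₁ = Tr √(M†M)`. -/
def traceNorm {n : Type*} [Fintype n] [DecidableEq n] (M : Matrix n n ℂ) : ℝ :=
  (((Matrix.posSemidef_conjTranspose_mul_self M).1.eigenvectorUnitary : Matrix n n ℂ) *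
    diagonal ((fun x : ℝ => (x : ℂ)) ∘ (√·) ∘ (Matrix.posSemidef_conjTranspose_mul_self M).1.eigenvalues) *
    (star (Matrix.posSemidef_conjTranspose_mul_self M).1.eigenvectorUnitary :
      Matrix n n ℂ)).trace.re

/-- Max-relative entropy of entanglement of a bipartite state: the infimum over separable
states `σ` of `D_max(ρ‖σ)`. -/
def EmaxState {m k : Type*} [Fintype m] [Fintype k]
    (ρ : Matrix (m × k) (m × k) ℂ) : EReal :=
  sInf {x : EReal | ∃ σ : Matrix (m × k) (m × k) ℂ,
    IsDensity σ ∧ SepState σ ∧ x = Dmax ρ σ}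

/-- The twisting unitary `U = ∑_{i,j} |i⟩⟨i|_A ⊗ |j⟩⟨j|_B ⊗ U^{(ij)}_{A'B'}`, on the
Hilbert space ordered as `(A × A') × (B × B')`. -/
def twistU (d dA dB : ℕ)
    (Uij : Fin d → Fin d → Matrix (Fin dA × Fin dB) (Fin dA × Fin dB) ℂ) :
    Matrix ((Fin d × Fin dA) × (Fin d × Fin dB)) ((Fin d × Fin dA) × (Fin d × Fin dB)) ℂ :=
  Matrix.of fun p q =>
    (if p.1.1 = q.1.1 ∧ p.2.1 = q.2.1 then (1:ℂ) else 0) *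
      Uij p.1.1 p.2.1 (p.1.2, p.2.2) (q.1.2, q.2.2)

/-- The state `ψ_d ⊗ σ_s` (maximally entangled on the key systems `A,B`, `σ_s` on the
shields `A',B'`), on the Hilbert space ordered as `(A × A') × (B × B')`. -/
def keyShield (d dA dB : ℕ)
    (σs : Matrix (Fin dA × Fin dB) (Fin dA × Fin dB) ℂ) :
    Matrix ((Fin d × Fin dA) × (Fin d × Fin dB)) ((Fin d × Fin dA) × (Fin d × Fin dB)) ℂ :=
  Matrix.of fun p q =>
    (if p.1.1 = p.2.1 ∧ q.1.1 = q.2.1 then (1 / (d:ℂ)) else 0) *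
      σs (p.1.2, p.2.2) (q.1.2, q.2.2)

namespace Stmt18Aux

variable {n : Type*} [Fintype n] [DecidableEq n]

lemma posSemidef_iff_eq_transpose_mul_self {A : Matrix n n ℂ} :
    A.PosSemidef ↔ ∃ B : Matrix n n ℂ, A = Bᴴ * B := by
  constructor
  · intro h
    open scoped MatrixOrder in
    obtain ⟨B, hB⟩ := CStarAlgebra.nonneg_iff_eq_star_mul_self.mp h.nonneg
    exact ⟨B, hB⟩
  · rintro ⟨B, rfl⟩
    exact posSemidef_conjTranspose_mul_self B

lemma diag_nonneg {A : Matrix n n ℂ} (hA : A.PosSemidef) (i : n) : 0 ≤ (A i i).re := by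
  have h := hA.dotProduct_mulVec_nonneg (fun j => if j = i then (1:ℂ) else 0)
  have he : dotProduct (star (fun j => if j = i then (1:ℂ) else 0))
      (A *ᵥ (fun j => if j = i then 1 else 0)) = A i i := by
    simp [dotProduct, mulVec, apply_ite, ite_mul, mul_ite]
  rw [he] at h
  exact (Complex.le_def.mp h).1

lemma trace_re_nonneg {A : Matrix n n ℂ} (hA : A.PosSemidef) : 0 ≤ A.trace.re := by
  rw [Matrix.trace, Complex.re_sum]
  exact Finset.sum_nonneg fun i _ => diag_nonneg hA i

lemma trace_mul_psd_nonneg {A B : Matrix n n ℂ} (hA : A.PosSemidef) (hB : B.PosSemidef) :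
    0 ≤ ((A * B).trace).re := by
  obtain ⟨C, rfl⟩ := posSemidef_iff_eq_transpose_mul_self.mp hB
  have h1 : (A * (Cᴴ * C)).trace = (C * A * Cᴴ).trace := by
    rw [← Matrix.mul_assoc, Matrix.trace_mul_cycle]
  rw [h1]
  exact trace_re_nonneg (hA.mul_mul_conjTranspose_same C)

lemma jordan {Δ : Matrix n n ℂ} (hΔ : Δ.IsHermitian) :
    ∃ Dp Dm : Matrix n n ℂ, Dp.PosSemidef ∧ Dm.PosSemidef ∧ Δ = Dp - Dm ∧
      (Dp.trace + Dm.trace).re = traceNorm Δ := by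
  set V : Matrix n n ℂ := (hΔ.eigenvectorUnitary : Matrix n n ℂ) with hV
  set lam := hΔ.eigenvalues with hlam
  have hVU : V * Vᴴ = 1 := by
    rw [← Matrix.star_eq_conjTranspose]
    exact (Matrix.mem_unitaryGroup_iff).mp hΔ.eigenvectorUnitary.2
  have hUV : Vᴴ * V = 1 := by
    rw [← Matrix.star_eq_conjTranspose]
    exact (Matrix.mem_unitaryGroup_iff').mp hΔ.eigenvectorUnitary.2
  have hdiagpsd : ∀ f : n → ℝ, (∀ i, 0 ≤ f i) →
      (V * Matrix.diagonal (fun i => ((f i : ℝ) : ℂ)) * Vᴴ).PosSemidef := by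
    intro f hf
    refine PosSemidef.mul_mul_conjTranspose_same (posSemidef_diagonal_iff.mpr ?_) V
    intro i
    rw [Complex.le_def]
    exact ⟨by simpa using hf i, by simp⟩
  have hcomb : ∀ f g : n → ℝ,
      V * Matrix.diagonal (fun i => ((f i : ℝ) : ℂ)) * Vᴴ +
      V * Matrix.diagonal (fun i => ((g i : ℝ) : ℂ)) * Vᴴ =
      V * Matrix.diagonal (fun i => (((f i + g i : ℝ)) : ℂ)) * Vᴴ := by
    intro f g
    rw [← Matrix.add_mul, ← Matrix.mul_add, Matrix.diagonal_add]
    congr 3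
    funext i
    push_cast
    rfl
  have htr : ∀ f : n → ℝ, (V * Matrix.diagonal (fun i => ((f i : ℝ) : ℂ)) * Vᴴ).trace
      = ((∑ i, f i : ℝ) : ℂ) := by
    intro f
    rw [Matrix.trace_mul_cycle, hUV, Matrix.one_mul, Matrix.trace_diagonal]
    push_cast
    rfl
  set S := V * Matrix.diagonal (fun i => ((|lam i| : ℝ) : ℂ)) * Vᴴ with hS
  have hSpsd : S.PosSemidef := hdiagpsd _ fun i => abs_nonneg _
  have key : ∀ D E : Matrix n n ℂ, (V * D * Vᴴ) * (V * E * Vᴴ) = V * (D * E) * Vᴴ := by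
    intro D E
    simp only [Matrix.mul_assoc]
    rw [← Matrix.mul_assoc Vᴴ V (E * Vᴴ), hUV, Matrix.one_mul]
  have hSsq : S ^ 2 = Δᴴ * Δ := by
    have hspec := hΔ.spectral_theorem
    rw [Unitary.conjStarAlgAut_apply, Matrix.star_eq_conjTranspose] at hspec
    rw [hΔ.eq, pow_two, hS]
    conv_rhs => rw [hspec]
    rw [key, key, Matrix.diagonal_mul_diagonal, Matrix.diagonal_mul_diagonal]
    congr 2
    funext j k
    simp only [Matrix.diagonal_apply, Function.comp_apply]
    split_ifs
    · norm_cast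
      exact congrArg (fun r : ℝ => (r : ℂ)) (abs_mul_abs_self (lam j))
    · rfl
  have hSsqrt : S = (((Matrix.posSemidef_conjTranspose_mul_self Δ).1.eigenvectorUnitary : Matrix n n ℂ) *
      diagonal ((fun x : ℝ => (x : ℂ)) ∘ (√·) ∘ (Matrix.posSemidef_conjTranspose_mul_self Δ).1.eigenvalues) *
      (star (Matrix.posSemidef_conjTranspose_mul_self Δ).1.eigenvectorUnitary :
        Matrix n n ℂ)) := by
    rw [show (((Matrix.posSemidef_conjTranspose_mul_self Δ).1.eigenvectorUnitary : Matrix n n ℂ) *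
      diagonal ((fun x : ℝ => (x : ℂ)) ∘ (√·) ∘ (Matrix.posSemidef_conjTranspose_mul_self Δ).1.eigenvalues) *
      (star (Matrix.posSemidef_conjTranspose_mul_self Δ).1.eigenvectorUnitary :
        Matrix n n ℂ)) = cfc Real.sqrt (Δᴴ * Δ) from
      ((Matrix.posSemidef_conjTranspose_mul_self Δ).1.cfc_eq _).symm]
    open scoped MatrixOrder in
    rw [← cfcₙ_eq_cfc, ← CFC.sqrt_eq_real_sqrt _ (posSemidef_conjTranspose_mul_self Δ).nonneg]
    open scoped MatrixOrder in
    exact (CFC.sqrt_unique (by rw [← pow_two]; exact hSsq) hSpsd.nonneg).symm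
  refine ⟨V * Matrix.diagonal (fun i => ((max (lam i) 0 : ℝ) : ℂ)) * Vᴴ,
    V * Matrix.diagonal (fun i => ((max (-lam i) 0 : ℝ) : ℂ)) * Vᴴ,
    hdiagpsd _ fun i => le_max_right _ _, hdiagpsd _ fun i => le_max_right _ _, ?_, ?_⟩
  · have hspec := hΔ.spectral_theorem
    rw [Unitary.conjStarAlgAut_apply, Matrix.star_eq_conjTranspose] at hspec
    rw [← Matrix.sub_mul, ← Matrix.mul_sub, Matrix.diagonal_sub]
    conv_lhs => rw [hspec]
    congr 2
    funext j k
    simp only [Matrix.diagonal_apply, Function.comp_apply]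
    split_ifs
    · have h2 : max (lam j) 0 - max (-lam j) 0 = lam j := by
        rcases le_total (lam j) 0 with h | h
        · rw [max_eq_right h, max_eq_left (by linarith)]; ring
        · rw [max_eq_left h, max_eq_right (by linarith)]; ring
      norm_cast
      exact congrArg (fun r : ℝ => (r : ℂ)) h2.symm
    · rfl
  · rw [← Matrix.trace_add, hcomb]
    have habs : ∀ x : ℝ, max x 0 + max (-x) 0 = |x| := by
      intro x
      rcases le_total x 0 with h | h
      · rw [max_eq_right h, max_eq_left (by linarith), abs_of_nonpos h]; ring
      · rw [max_eq_left h, max_eq_right (by linarith), abs_of_nonneg h]; ring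
    simp_rw [habs]
    rw [htr, traceNorm, ← hSsqrt, hS, htr]

lemma trace_T_pert {T Δ : Matrix n n ℂ} (hT : T.PosSemidef)
    (hT1 : ((1:Matrix n n ℂ) - T).PosSemidef)
    (hΔ : Δ.IsHermitian) (h0 : Δ.trace = 0) :
    -(traceNorm Δ / 2) ≤ ((T * Δ).trace).re := by
  obtain ⟨Dp, Dm, hp, hm, hd, htn⟩ := jordan hΔ
  have e1 : (T * Δ).trace = (T * Dp).trace - (T * Dm).trace := by
    rw [hd, Matrix.mul_sub, Matrix.trace_sub]
  have e2 : 0 ≤ ((T * Dp).trace).re := trace_mul_psd_nonneg hT hp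
  have e3 : ((T * Dm).trace).re ≤ (Dm.trace).re := by
    have h := trace_mul_psd_nonneg hT1 hm
    have heq : (((1:Matrix n n ℂ) - T) * Dm).trace = Dm.trace - (T * Dm).trace := by
      rw [Matrix.sub_mul, Matrix.trace_sub, Matrix.one_mul]
    rw [heq, Complex.sub_re] at h
    linarith
  have e4 : (Dp.trace).re - (Dm.trace).re = 0 := by
    have h : Δ.trace = Dp.trace - Dm.trace := by rw [hd, Matrix.trace_sub]
    rw [h0] at h
    have h2 := congrArg Complex.re h.symm
    simpa [Complex.sub_re] using h2
  have e5 : (Dp.trace).re + (Dm.trace).re = traceNorm Δ := by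
    simpa [Complex.add_re] using htn
  rw [e1, Complex.sub_re]
  linarith

lemma trace_mul_outer (T : Matrix n n ℂ) (w : n → ℂ) :
    (T * Matrix.vecMulVec w (star w)).trace = dotProduct (star w) (T *ᵥ w) := by
  simp only [Matrix.trace, Matrix.diag, Matrix.mul_apply, Matrix.vecMulVec_apply,
    dotProduct, Matrix.mulVec, Pi.star_apply]
  apply Finset.sum_congr rfl
  intro p _
  rw [Finset.mul_sum]
  apply Finset.sum_congr rfl
  intro q _
  ring

lemma conj_form (A M : Matrix n n ℂ) (w : n → ℂ) :
    dotProduct (star w) ((A * M * Aᴴ) *ᵥ w)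
      = dotProduct (star (Aᴴ *ᵥ w)) (M *ᵥ (Aᴴ *ᵥ w)) := by
  rw [Matrix.star_mulVec, Matrix.conjTranspose_conjTranspose, Matrix.mulVec_mulVec]
  simp [Matrix.dotProduct_mulVec, Matrix.vecMul_vecMul, Matrix.mul_assoc]

section Nsq

variable {ι : Type*} [Fintype ι]

def nsq (x : ι → ℂ) : ℝ := ∑ i, Complex.normSq (x i)

lemma nsq_nonneg (x : ι → ℂ) : 0 ≤ nsq x :=
  Finset.sum_nonneg fun i _ => Complex.normSq_nonneg _

lemma star_dot (x : ι → ℂ) : dotProduct (star x) x = (nsq x : ℂ) := by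
  simp only [dotProduct, Pi.star_apply, nsq]
  push_cast
  apply Finset.sum_congr rfl
  intro i _
  rw [Complex.star_def, mul_comm, Complex.mul_conj]

def en (x : ι → ℂ) : ℝ := Real.sqrt (nsq x)

lemma en_nonneg (x : ι → ℂ) : 0 ≤ en x := Real.sqrt_nonneg _

lemma en_sq (x : ι → ℂ) : en x ^ 2 = nsq x := Real.sq_sqrt (nsq_nonneg x)

lemma en_eq_norm (x : ι → ℂ) : en x = ‖(WithLp.equiv 2 (ι → ℂ)).symm x‖ := by
  rw [EuclideanSpace.norm_eq, en]
  congr 1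
  apply Finset.sum_congr rfl
  intro i _
  rw [← Complex.sq_norm]
  rfl

lemma en_sum_le {κ : Type*} [Fintype κ] (f : κ → ι → ℂ) :
    en (∑ k, f k) ≤ ∑ k, en (f k) := by
  simp only [en_eq_norm]
  have h := norm_sum_le (E := EuclideanSpace ℂ ι) Finset.univ
    (fun k => (WithLp.equiv 2 (ι → ℂ)).symm (f k))
  refine le_trans (le_of_eq ?_) h
  congr 1
  exact map_sum (WithLp.linearEquiv 2 ℂ (ι → ℂ)).symm f Finset.univ

end Nsq

lemma nsq_mulVec_unitary {A : Matrix n n ℂ} (hA : A * Aᴴ = 1) (x : n → ℂ) :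
    nsq (Aᴴ *ᵥ x) = nsq x := by
  have h := conj_form A 1 x
  rw [Matrix.mul_one, hA, Matrix.one_mulVec, Matrix.one_mulVec, star_dot, star_dot] at h
  exact_mod_cast h.symm

section Special

variable {d dA dB : ℕ}

lemma twistU_mul_twistU (F G : Fin d → Fin d → Matrix (Fin dA × Fin dB) (Fin dA × Fin dB) ℂ) :
    twistU d dA dB F * twistU d dA dB G = twistU d dA dB (fun i j => F i j * G i j) := by
  ext p q
  simp only [Matrix.mul_apply, twistU, Matrix.of_apply]
  rw [Fintype.sum_prod_type]
  simp_rw [Fintype.sum_prod_type]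
  simp [ite_and, ite_mul, mul_ite, zero_mul, mul_zero, Finset.sum_ite_eq, Finset.sum_ite_eq',
    Finset.mul_sum, Finset.sum_mul]
  split_ifs with h1 h2
  · rw [h1, h2]
  · rfl
  · rfl

lemma twistU_conjT (F : Fin d → Fin d → Matrix (Fin dA × Fin dB) (Fin dA × Fin dB) ℂ) :
    (twistU d dA dB F)ᴴ = twistU d dA dB (fun i j => (F i j)ᴴ) := by
  ext p q
  simp only [Matrix.conjTranspose_apply, twistU, Matrix.of_apply, star_mul', apply_ite (star : ℂ → ℂ),
    star_one, star_zero]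
  by_cases h1 : p.1.1 = q.1.1
  · by_cases h2 : p.2.1 = q.2.1
    · simp [h1, h2]
    · simp [h1, h2, Ne.symm h2]
  · simp [h1, Ne.symm h1]

lemma twistU_one : twistU d dA dB (fun _ _ => (1 : Matrix (Fin dA × Fin dB) (Fin dA × Fin dB) ℂ))
    = 1 := by
  ext p q
  simp only [twistU, Matrix.of_apply, Matrix.one_apply, Prod.ext_iff, ite_and]
  by_cases h1 : p.1.1 = q.1.1 <;> by_cases h2 : p.2.1 = q.2.1 <;>
    by_cases h3 : p.1.2 = q.1.2 <;> by_cases h4 : p.2.2 = q.2.2 <;>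
    simp [h1, h2, h3, h4, Prod.ext_iff]

lemma keyShield_mul (hd : (d:ℂ) ≠ 0) (S T : Matrix (Fin dA × Fin dB) (Fin dA × Fin dB) ℂ) :
    keyShield d dA dB S * keyShield d dA dB T = keyShield d dA dB (S * T) := by
  have hcard : ((Finset.univ : Finset (Fin d)).card : ℂ) = (d : ℂ) := by simp
  ext p q
  simp only [Matrix.mul_apply, keyShield, Matrix.of_apply]
  rw [Fintype.sum_prod_type]
  simp_rw [Fintype.sum_prod_type]
  simp [ite_and, ite_mul, mul_ite, zero_mul, mul_zero, Finset.sum_ite_eq, Finset.sum_ite_eq',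
    Finset.mul_sum, Finset.sum_mul]
  by_cases h1 : p.1.1 = p.2.1 <;> by_cases h2 : q.1.1 = q.2.1 <;> simp [h1, h2]
  apply Finset.sum_congr rfl
  intro x _
  apply Finset.sum_congr rfl
  intro y _
  field_simp

lemma keyShield_conjT (S : Matrix (Fin dA × Fin dB) (Fin dA × Fin dB) ℂ) :
    (keyShield d dA dB S)ᴴ = keyShield d dA dB Sᴴ := by
  ext p q
  simp only [Matrix.conjTranspose_apply, keyShield, Matrix.of_apply, star_mul', apply_ite (star : ℂ → ℂ),
    star_zero, star_div₀, star_one, star_natCast]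
  simp only [and_comm]

lemma keyShield_trace (hd : (d:ℂ) ≠ 0) (S : Matrix (Fin dA × Fin dB) (Fin dA × Fin dB) ℂ) :
    (keyShield d dA dB S).trace = S.trace := by
  simp only [Matrix.trace, Matrix.diag, keyShield, Matrix.of_apply]
  rw [Fintype.sum_prod_type]
  simp_rw [Fintype.sum_prod_type]
  simp [ite_and, ite_mul, zero_mul, Finset.sum_ite_eq, Finset.sum_ite_eq']
  simp_rw [Finset.mul_sum, ← mul_assoc, mul_inv_cancel₀ hd, one_mul]

lemma keyShield_one_mulVec (y : ((Fin d × Fin dA) × (Fin d × Fin dB)) → ℂ)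
    (i : Fin d) (a : Fin dA) (j : Fin d) (b : Fin dB) :
    ((keyShield d dA dB 1) *ᵥ y) ((i, a), (j, b))
      = (if i = j then (1/(d:ℂ)) else 0) * ∑ k, y ((k, a), (k, b)) := by
  simp only [Matrix.mulVec, dotProduct, keyShield, Matrix.of_apply]
  rw [Fintype.sum_prod_type]
  simp_rw [Fintype.sum_prod_type]
  simp [Matrix.one_apply, ite_and, ite_mul, zero_mul, mul_ite, mul_zero,
    Finset.sum_ite_eq, Finset.sum_ite_eq', Prod.ext_iff, Finset.mul_sum]

lemma keyShield_one_form (y : ((Fin d × Fin dA) × (Fin d × Fin dB)) → ℂ) :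
    dotProduct (star y) ((keyShield d dA dB 1) *ᵥ y)
      = (1/(d:ℂ)) * dotProduct (star (fun c : Fin dA × Fin dB => ∑ k, y ((k, c.1), (k, c.2))))
          (fun c : Fin dA × Fin dB => ∑ k, y ((k, c.1), (k, c.2))) := by
  simp only [dotProduct, Pi.star_apply]
  rw [Fintype.sum_prod_type]
  simp_rw [Fintype.sum_prod_type, keyShield_one_mulVec]
  simp [ite_mul, mul_ite, zero_mul, mul_zero, Finset.sum_ite_eq, Finset.sum_ite_eq',
    Finset.mul_sum, Finset.sum_mul]
  rw [Finset.sum_comm]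
  apply Finset.sum_congr rfl
  intro a _
  rw [Finset.sum_comm]
  apply Finset.sum_congr rfl
  intro b _
  rw [Finset.sum_comm]
  apply Finset.sum_congr rfl
  intro i _
  apply Finset.sum_congr rfl
  intro k _
  ring

lemma twistU_mulVec (F : Fin d → Fin d → Matrix (Fin dA × Fin dB) (Fin dA × Fin dB) ℂ)
    (w : ((Fin d × Fin dA) × (Fin d × Fin dB)) → ℂ) (i : Fin d) (a : Fin dA) (j : Fin d)
    (b : Fin dB) :
    (twistU d dA dB F *ᵥ w) ((i, a), (j, b))
      = (F i j *ᵥ (fun c : Fin dA × Fin dB => w ((i, c.1), (j, c.2)))) (a, b) := by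
  simp only [Matrix.mulVec, dotProduct, twistU, Matrix.of_apply]
  rw [Fintype.sum_prod_type]
  simp_rw [Fintype.sum_prod_type]
  simp [ite_and, ite_mul, zero_mul, Finset.sum_ite_eq, Finset.sum_ite_eq']

end Special

section Decomp

lemma psd_decomp {m : Type*} [Fintype m] [DecidableEq m] {P : Matrix m m ℂ}
    (hP : P.PosSemidef) : ∃ u : m → (m → ℂ),
      P = ∑ k, Matrix.vecMulVec (u k) (star (u k)) ∧ (∑ k, nsq (u k)) = P.trace.re := by
  obtain ⟨B, rfl⟩ := posSemidef_iff_eq_transpose_mul_self.mp hP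
  refine ⟨fun k p => star (B k p), ?_, ?_⟩
  · ext p q
    simp only [Matrix.mul_apply, Matrix.conjTranspose_apply, Matrix.sum_apply,
      Matrix.vecMulVec_apply, Pi.star_apply, star_star]
  · rw [Matrix.trace, Complex.re_sum]
    simp_rw [nsq]
    rw [Finset.sum_comm]
    apply Finset.sum_congr rfl
    intro p _
    rw [Matrix.diag, Matrix.mul_apply, Complex.re_sum]
    apply Finset.sum_congr rfl
    intro k _
    rw [Matrix.conjTranspose_apply, Complex.star_def, mul_comm, Complex.mul_conj,
      Complex.ofReal_re, Complex.normSq_conj]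

lemma outer_kron {m k : Type*} [Fintype m] [Fintype k] (u : m → ℂ) (v : k → ℂ) :
    (Matrix.vecMulVec u (star u)) ⊗ₖ (Matrix.vecMulVec v (star v))
      = Matrix.vecMulVec (fun p : m × k => u p.1 * v p.2)
          (star (fun p : m × k => u p.1 * v p.2)) := by
  ext p q
  simp only [Matrix.kroneckerMap_apply, Matrix.vecMulVec_apply, Pi.star_apply, star_mul']
  ring

lemma kron_sum_sum {m k ι₁ ι₂ : Type*} [Fintype m] [Fintype k] [Fintype ι₁] [Fintype ι₂]
    (A : ι₁ → Matrix m m ℂ) (B : ι₂ → Matrix k k ℂ) :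
    (∑ i, A i) ⊗ₖ (∑ j, B j) = ∑ i, ∑ j, (A i ⊗ₖ B j) := by
  ext p q
  simp only [Matrix.kroneckerMap_apply, Matrix.sum_apply, Finset.sum_mul_sum]

end Decomp

section Main

variable {d dA dB : ℕ}
  (Uij : Fin d → Fin d → Matrix (Fin dA × Fin dB) (Fin dA × Fin dB) ℂ)

lemma pure_bound (hU : ∀ i j, Uij i j * (Uij i j)ᴴ = 1)
    (u : Fin d × Fin dA → ℂ) (v : Fin d × Fin dB → ℂ) :
    (dotProduct (star (fun p : (Fin d × Fin dA) × (Fin d × Fin dB) => u p.1 * v p.2))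
      ((twistU d dA dB Uij * keyShield d dA dB 1 * (twistU d dA dB Uij)ᴴ) *ᵥ
        (fun p => u p.1 * v p.2))).re
      ≤ (1/(d:ℝ)) * (nsq u * nsq v) := by
  set w : ((Fin d × Fin dA) × (Fin d × Fin dB)) → ℂ := fun p => u p.1 * v p.2 with hw
  rw [conj_form, keyShield_one_form, star_dot]
  set z : Fin dA × Fin dB → ℂ :=
    fun c => ∑ k, ((twistU d dA dB Uij)ᴴ *ᵥ w) ((k, c.1), (k, c.2)) with hz
  have hre : ((1/(d:ℂ)) * ((nsq z : ℝ) : ℂ)).re = (1/(d:ℝ)) * nsq z := by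
    rw [← Complex.ofReal_natCast, ← Complex.ofReal_one, ← Complex.ofReal_div,
      ← Complex.ofReal_mul, Complex.ofReal_re]
  rw [hre]
  have hdnn : (0:ℝ) ≤ 1/(d:ℝ) := by positivity
  refine mul_le_mul_of_nonneg_left ?_ hdnn
  -- nsq z ≤ nsq u * nsq v
  have hyk : ∀ k : Fin d, (fun c : Fin dA × Fin dB =>
      ((twistU d dA dB Uij)ᴴ *ᵥ w) ((k, c.1), (k, c.2)))
      = (Uij k k)ᴴ *ᵥ (fun c : Fin dA × Fin dB => u (k, c.1) * v (k, c.2)) := by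
    intro k
    funext c
    rw [twistU_conjT]
    rw [show ((k, c.1), (k, c.2)) = ((k, c.1), (k, c.2)) from rfl]
    rw [twistU_mulVec (fun i j => (Uij i j)ᴴ) w k c.1 k c.2]
  have hzsum : z = ∑ k, (Uij k k)ᴴ *ᵥ (fun c : Fin dA × Fin dB => u (k, c.1) * v (k, c.2)) := by
    funext c
    rw [hz, Finset.sum_apply]
    apply Finset.sum_congr rfl
    intro k _
    rw [← hyk k]
  set uk : Fin d → Fin dA → ℂ := fun k a => u (k, a) with huk
  set vk : Fin d → Fin dB → ℂ := fun k b => v (k, b) with hvk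
  have hnw : ∀ k, nsq (fun c : Fin dA × Fin dB => u (k, c.1) * v (k, c.2))
      = nsq (uk k) * nsq (vk k) := by
    intro k
    rw [nsq, Fintype.sum_prod_type]
    simp_rw [Complex.normSq_mul]
    rw [← Finset.sum_mul_sum]
    rfl
  have henz : en z ≤ ∑ k, en (uk k) * en (vk k) := by
    rw [hzsum]
    refine le_trans (en_sum_le _) ?_
    apply Finset.sum_le_sum
    intro k _
    rw [en, nsq_mulVec_unitary (hU k k), hnw k, Real.sqrt_mul (nsq_nonneg _), en, en]
  have hcs : (∑ k, en (uk k) * en (vk k)) ^ 2 ≤ nsq u * nsq v := by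
    have h1 := Finset.sum_mul_sq_le_sq_mul_sq Finset.univ (fun k => en (uk k)) (fun k => en (vk k))
    have h2 : ∑ k, en (uk k) ^ 2 = nsq u := by
      simp_rw [en_sq]
      rw [nsq, Fintype.sum_prod_type]
      rfl
    have h3 : ∑ k, en (vk k) ^ 2 = nsq v := by
      simp_rw [en_sq]
      rw [nsq, Fintype.sum_prod_type]
      rfl
    calc (∑ k, en (uk k) * en (vk k)) ^ 2 ≤ (∑ k, en (uk k) ^ 2) * (∑ k, en (vk k) ^ 2) := h1
      _ = nsq u * nsq v := by rw [h2, h3]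
  calc nsq z = en z ^ 2 := (en_sq z).symm
    _ ≤ (∑ k, en (uk k) * en (vk k)) ^ 2 := by
        apply pow_le_pow_left₀ (en_nonneg z) henz
    _ ≤ nsq u * nsq v := hcs

set_option maxHeartbeats 1000000 in
lemma prod_bound (hU : ∀ i j, Uij i j * (Uij i j)ᴴ = 1)
    {P : Matrix (Fin d × Fin dA) (Fin d × Fin dA) ℂ}
    {Q : Matrix (Fin d × Fin dB) (Fin d × Fin dB) ℂ}
    (hP : IsDensity P) (hQ : IsDensity Q) :
    (((twistU d dA dB Uij * keyShield d dA dB 1 * (twistU d dA dB Uij)ᴴ)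
      * (P ⊗ₖ Q)).trace).re ≤ 1/(d:ℝ) := by
  set T := twistU d dA dB Uij * keyShield d dA dB 1 * (twistU d dA dB Uij)ᴴ with hT
  obtain ⟨uu, hPu, hPtr⟩ := psd_decomp hP.1
  obtain ⟨vv, hQv, hQtr⟩ := psd_decomp hQ.1
  have hPtr1 : (∑ k, nsq (uu k)) = 1 := by
    rw [hPtr, hP.2, Complex.one_re]
  have hQtr1 : (∑ l, nsq (vv l)) = 1 := by
    rw [hQtr, hQ.2, Complex.one_re]
  rw [hPu, hQv, kron_sum_sum]
  simp_rw [outer_kron]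
  rw [Matrix.mul_sum, Matrix.trace_sum, Complex.re_sum]
  simp_rw [Matrix.mul_sum, Matrix.trace_sum, Complex.re_sum]
  have hb : ∀ k l, ((T * Matrix.vecMulVec (fun p : (Fin d × Fin dA) × (Fin d × Fin dB)
        => uu k p.1 * vv l p.2)
      (star fun p : (Fin d × Fin dA) × (Fin d × Fin dB) => uu k p.1 * vv l p.2)).trace).re
      ≤ (1/(d:ℝ)) * (nsq (uu k) * nsq (vv l)) := by
    intro k l
    rw [trace_mul_outer]
    exact pure_bound Uij hU (uu k) (vv l)
  refine le_trans (Finset.sum_le_sum fun k _ => Finset.sum_le_sum fun l _ => hb k l) ?_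
  have hsum : ∑ k : Fin d × Fin dA, ∑ l : Fin d × Fin dB,
      (1/(d:ℝ)) * (nsq (uu k) * nsq (vv l)) = 1/(d:ℝ) := by
    calc ∑ k : Fin d × Fin dA, ∑ l : Fin d × Fin dB,
          (1/(d:ℝ)) * (nsq (uu k) * nsq (vv l))
        = (1/(d:ℝ)) * ∑ k : Fin d × Fin dA, ∑ l : Fin d × Fin dB,
            nsq (uu k) * nsq (vv l) := by
          rw [Finset.mul_sum]
          exact Finset.sum_congr rfl fun k _ => by rw [Finset.mul_sum]
      _ = (1/(d:ℝ)) * ((∑ k, nsq (uu k)) * (∑ l, nsq (vv l))) := by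
          rw [Finset.sum_mul_sum]
      _ = 1/(d:ℝ) := by rw [hPtr1, hQtr1, mul_one, mul_one]
  rw [hsum]

lemma sep_bound (hU : ∀ i j, Uij i j * (Uij i j)ᴴ = 1)
    {σ : Matrix ((Fin d × Fin dA) × (Fin d × Fin dB))
      ((Fin d × Fin dA) × (Fin d × Fin dB)) ℂ}
    (hsep : SepState σ) :
    (((twistU d dA dB Uij * keyShield d dA dB 1 * (twistU d dA dB Uij)ᴴ) * σ).trace).re
      ≤ 1/(d:ℝ) := by
  set T := twistU d dA dB Uij * keyShield d dA dB 1 * (twistU d dA dB Uij)ᴴ with hT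
  obtain ⟨L, p, P, Q, hp0, hp1, hPd, hQd, rfl⟩ := hsep
  rw [Matrix.mul_sum, Matrix.trace_sum, Complex.re_sum]
  have hterm : ∀ i, ((T * ((p i : ℂ) • (P i ⊗ₖ Q i))).trace).re
      = p i * ((T * (P i ⊗ₖ Q i)).trace).re := by
    intro i
    rw [mul_smul_comm, Matrix.trace_smul, smul_eq_mul, Complex.mul_re]
    simp [Complex.ofReal_re, Complex.ofReal_im]
  calc (∑ i, ((T * ((p i : ℂ) • (P i ⊗ₖ Q i))).trace).re)
      = ∑ i, p i * ((T * (P i ⊗ₖ Q i)).trace).re := by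
        exact Finset.sum_congr rfl fun i _ => hterm i
    _ ≤ ∑ i, p i * (1/(d:ℝ)) := by
        apply Finset.sum_le_sum
        intro i _
        exact mul_le_mul_of_nonneg_left (prod_bound Uij hU (hPd i) (hQd i)) (hp0 i)
    _ = 1/(d:ℝ) := by rw [← Finset.sum_mul, hp1, one_mul]

end Main

end Stmt18Aux

open Stmt18Aux

/-- A state `ε`-close in trace norm to a private state with key
dimension `d` has max-relative entropy of entanglement at least
`log₂ d + 2 log₂(1 − ε/2)` across the bipartition `AA' : BB'`. -/
theorem stmt18 (d dA dB : ℕ) (hd : 1 ≤ d) (hdA : 1 ≤ dA) (hdB : 1 ≤ dB)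
    (σs : Matrix (Fin dA × Fin dB) (Fin dA × Fin dB) ℂ) (hσs : IsDensity σs)
    (Uij : Fin d → Fin d → Matrix (Fin dA × Fin dB) (Fin dA × Fin dB) ℂ)
    (hU : ∀ i j, Uij i j * (Uij i j)ᴴ = 1 ∧ (Uij i j)ᴴ * Uij i j = 1)
    (ρ : Matrix ((Fin d × Fin dA) × (Fin d × Fin dB))
      ((Fin d × Fin dA) × (Fin d × Fin dB)) ℂ)
    (hρ : IsDensity ρ) (ε : ℝ) (hε0 : 0 ≤ ε) (hε2 : ε < 2)
    (hclose : traceNorm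
        (ρ - twistU d dA dB Uij * keyShield d dA dB σs * (twistU d dA dB Uij)ᴴ) ≤ ε) :
    ((Real.logb 2 d + 2 * Real.logb 2 (1 - ε / 2) : ℝ) : EReal) ≤ EmaxState ρ := by
  classical
  have hdC : (d:ℂ) ≠ 0 := Nat.cast_ne_zero.mpr (by omega)
  set U := twistU d dA dB Uij with hUdef
  set P := keyShield d dA dB (1 : Matrix (Fin dA × Fin dB) (Fin dA × Fin dB) ℂ) with hPdef
  set K := keyShield d dA dB σs with hKdef
  set T := U * P * Uᴴ with hTdef
  set γ := U * K * Uᴴ with hγdef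
  have hUU : U * Uᴴ = 1 := by
    rw [hUdef, twistU_conjT, twistU_mul_twistU]
    rw [show (fun i j => Uij i j * (Uij i j)ᴴ)
      = (fun _ _ : Fin d => (1 : Matrix (Fin dA × Fin dB) (Fin dA × Fin dB) ℂ))
      from funext fun i => funext fun j => (hU i j).1]
    exact twistU_one
  have hU'U : Uᴴ * U = 1 := by
    rw [hUdef, twistU_conjT, twistU_mul_twistU]
    rw [show (fun i j => (Uij i j)ᴴ * Uij i j)
      = (fun _ _ : Fin d => (1 : Matrix (Fin dA × Fin dB) (Fin dA × Fin dB) ℂ))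
      from funext fun i => funext fun j => (hU i j).2]
    exact twistU_one
  have hPH : Pᴴ = P := by rw [hPdef, keyShield_conjT, Matrix.conjTranspose_one]
  have hPP : P * P = P := by rw [hPdef, keyShield_mul hdC, Matrix.one_mul]
  have hTH : Tᴴ = T := by
    rw [hTdef, Matrix.conjTranspose_mul, Matrix.conjTranspose_mul,
      Matrix.conjTranspose_conjTranspose, hPH, ← Matrix.mul_assoc]
  have hTT : T * T = T := by
    rw [hTdef]
    simp only [Matrix.mul_assoc]
    rw [← Matrix.mul_assoc Uᴴ U (P * Uᴴ), hU'U, Matrix.one_mul,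
      ← Matrix.mul_assoc P P Uᴴ, hPP]
  have hTpsd : T.PosSemidef := posSemidef_iff_eq_transpose_mul_self.mpr ⟨T, by rw [hTH, hTT]⟩
  have h1T : ((1 : Matrix ((Fin d × Fin dA) × (Fin d × Fin dB))
      ((Fin d × Fin dA) × (Fin d × Fin dB)) ℂ) - T).PosSemidef := by
    refine posSemidef_iff_eq_transpose_mul_self.mpr ⟨1 - T, ?_⟩
    have h1 : ((1 : Matrix ((Fin d × Fin dA) × (Fin d × Fin dB))
        ((Fin d × Fin dA) × (Fin d × Fin dB)) ℂ) - T)ᴴ = 1 - T := by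
      rw [Matrix.conjTranspose_sub, Matrix.conjTranspose_one, hTH]
    rw [h1, Matrix.sub_mul, Matrix.mul_sub, Matrix.mul_sub, Matrix.mul_one,
      Matrix.one_mul, hTT]
    simp
  have hKH : Kᴴ = K := by rw [hKdef, keyShield_conjT, hσs.1.1]
  have hγH : γ.IsHermitian := by
    show γᴴ = γ
    rw [hγdef, Matrix.conjTranspose_mul, Matrix.conjTranspose_mul,
      Matrix.conjTranspose_conjTranspose, hKH, ← Matrix.mul_assoc]
  have hγtr : γ.trace = 1 := by
    rw [hγdef, Matrix.trace_mul_cycle, hU'U, Matrix.one_mul,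
      hKdef, keyShield_trace hdC, hσs.2]
  have hTγ : (T * γ).trace = 1 := by
    have h2 : T * γ = U * (P * K) * Uᴴ := by
      rw [hTdef, hγdef]
      simp only [Matrix.mul_assoc]
      rw [← Matrix.mul_assoc Uᴴ U (K * Uᴴ), hU'U, Matrix.one_mul]
    rw [h2, Matrix.trace_mul_cycle, hU'U, Matrix.one_mul,
      hPdef, hKdef, keyShield_mul hdC, Matrix.one_mul, keyShield_trace hdC, hσs.2]
  set Δ := ρ - γ with hΔdef
  have hΔH : Δ.IsHermitian := by
    show Δᴴ = Δ
    rw [hΔdef, Matrix.conjTranspose_sub, hρ.1.1, hγH.eq]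
  have hΔtr : Δ.trace = 0 := by rw [hΔdef, Matrix.trace_sub, hρ.2, hγtr, sub_self]
  have hpert : -(ε/2) ≤ ((T * Δ).trace).re := by
    have h := trace_T_pert hTpsd h1T hΔH hΔtr
    have h2 : traceNorm Δ ≤ ε := hclose
    linarith
  have hTρ : 1 - ε/2 ≤ ((T * ρ).trace).re := by
    have hρeq : ρ = γ + Δ := by rw [hΔdef]; abel
    have h3 : (T * ρ).trace = (T * γ).trace + (T * Δ).trace := by
      rw [hρeq, Matrix.mul_add, Matrix.trace_add]
    rw [h3, Complex.add_re, hTγ, Complex.one_re]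
    linarith
  apply le_sInf
  rintro x ⟨σ, hσden, hσsep, rfl⟩
  apply le_sInf
  rintro y ⟨r, rfl, hpsd⟩
  rw [EReal.coe_le_coe_iff]
  have hsB : ((T * σ).trace).re ≤ 1/(d:ℝ) :=
    sep_bound Uij (fun i j => (hU i j).1) hσsep
  have hpos : 0 ≤ ((T * (((2:ℝ)^r) • σ - ρ)).trace).re := trace_mul_psd_nonneg hTpsd hpsd
  have hexp : ((T * (((2:ℝ)^r) • σ - ρ)).trace).re
      = (2:ℝ)^r * ((T*σ).trace).re - ((T*ρ).trace).re := by
    rw [Matrix.mul_sub, Matrix.trace_sub, Complex.sub_re, mul_smul_comm, Matrix.trace_smul]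
    congr 1
    rw [Complex.real_smul, Complex.mul_re]
    simp
  have hd1 : (1:ℝ) ≤ (d:ℝ) := by exact_mod_cast hd
  have hεpos : (0:ℝ) < 1 - ε/2 := by linarith
  have h2rpos : (0:ℝ) < (2:ℝ)^r := Real.rpow_pos_of_pos (by norm_num) r
  have h2r : (d:ℝ) * (1 - ε/2) ≤ (2:ℝ)^r := by
    have e1 : ((T*ρ).trace).re ≤ (2:ℝ)^r * ((T*σ).trace).re := by
      rw [hexp] at hpos; linarith
    have e2 : (2:ℝ)^r * ((T*σ).trace).re ≤ (2:ℝ)^r * (1/(d:ℝ)) :=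
      mul_le_mul_of_nonneg_left hsB h2rpos.le
    have e3 : 1 - ε/2 ≤ (2:ℝ)^r * (1/(d:ℝ)) := by linarith
    have hdpos : (0:ℝ) < (d:ℝ) := by linarith
    calc (d:ℝ) * (1-ε/2) ≤ (d:ℝ) * ((2:ℝ)^r * (1/(d:ℝ))) :=
          mul_le_mul_of_nonneg_left e3 hdpos.le
      _ = (2:ℝ)^r := by field_simp
  have hlog : Real.logb 2 ((d:ℝ) * (1 - ε/2)) ≤ r := by
    have h4 : Real.logb 2 ((d:ℝ) * (1 - ε/2)) ≤ Real.logb 2 ((2:ℝ)^r) :=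
      Real.logb_le_logb_of_le (by norm_num) (by positivity) h2r
    rwa [Real.logb_rpow (by norm_num) (by norm_num)] at h4
  have hsplit : Real.logb 2 ((d:ℝ) * (1 - ε/2))
      = Real.logb 2 (d:ℝ) + Real.logb 2 (1 - ε/2) :=
    Real.logb_mul (by positivity) (ne_of_gt hεpos)
  have hneg : Real.logb 2 (1 - ε/2) ≤ 0 := Real.logb_nonpos (by norm_num) hεpos.le (by linarith)
  linarith
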